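/- Let p > 3 be a prime with p ≡ 1 (mod 3), and let k ∈ ZMod p with k ≠ 0. Then there exist integers a, b with b > 0, a ≡ 2 (mod 3), and p = a² + 3b², such that the number N_p(k) of F_p-rational points (including the point at infinity) of the curve y² = x³ + k over F_p satisfies: (i) if k is a sixth power in ZMod p then N_p(k) = p + 1 + 2a; (ii) if k is a cube but not a square in ZMod p then N_p(k) = p + 1 − 2a; (iii) if k is a square but not a cube in ZMod p then N_p(k) = p + 1 − a + 3b or N_p(k) = p + 1 − a − 3b; (iv) if k is neither a square nor a cube in ZMod p then N_p(k) = p + 1 + a + 3b or N_p(k) = p + 1 + a − 3b. -/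

import Mathlib

open Finset Complex WeierstrassCurve WeierstrassCurve.Affine

noncomputable section
set_option linter.unusedSectionVars false
set_option maxHeartbeats 1000000
namespace SB


lemma conj_of_cube_eq_one {z : ℂ} (h : z ^ 3 = 1) : (starRingEnd ℂ) z = z ^ 2 := by
  have hz : ‖z‖ = 1 := by
    have h1 : ‖z‖ ^ 3 = 1 := by rw [← norm_pow, h, norm_one]
    nlinarith [norm_nonneg z, sq_nonneg (‖z‖ - 1), sq_nonneg (‖z‖ + 1)]
  rw [← Complex.inv_eq_conj hz]
  exact inv_eq_of_mul_eq_one_right (by linear_combination h)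

variable {F : Type} [Field F] [Fintype F] [DecidableEq F]

lemma exists_cube_root_of_unity (h3 : 3 ∣ Fintype.card F - 1) :
    ∃ z : F, z ^ 3 = 1 ∧ z ≠ 1 := by
  haveI : Fact (Nat.Prime 3) := ⟨by norm_num⟩
  have h3' : 3 ∣ Fintype.card Fˣ := by rwa [Fintype.card_units]
  obtain ⟨g, hg⟩ := exists_prime_orderOf_dvd_card 3 h3'
  refine ⟨(g : F), ?_, ?_⟩
  · have : g ^ 3 = 1 := by rw [← hg]; exact pow_orderOf_eq_one g
    have h2 := congrArg (Units.val) this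
    push_cast at h2
    exact h2
  · intro h
    have : g = 1 := Units.ext h
    rw [this, orderOf_one] at hg
    norm_num at hg

lemma one_add_add_sq {K : Type*} [Field K] {z : K} (hz3 : z ^ 3 = 1) (hz1 : z ≠ 1) :
    1 + z + z ^ 2 = 0 := by
  have h : (z - 1) * (1 + z + z ^ 2) = 0 := by linear_combination hz3
  rcases mul_eq_zero.mp h with h' | h'
  · exact absurd (by linear_combination h') hz1
  · exact h'

lemma card_cube_roots (h3 : 3 ∣ Fintype.card F - 1) {u : F} (hu : u ≠ 0) :
    (univ.filter fun x : F => x ^ 3 = u ^ 3).card = 3 := by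
  obtain ⟨z, hz3, hz1⟩ := exists_cube_root_of_unity h3
  have hsum := one_add_add_sq hz3 hz1
  have hz0 : z ≠ 0 := by rintro rfl; simp at hz3
  have hz21 : z ^ 2 ≠ 1 := fun h => hz1 (by linear_combination hz3 - z * h)
  have hfil : (univ.filter fun x : F => x ^ 3 = u ^ 3) = {u, u * z, u * z ^ 2} := by
    ext x
    simp only [mem_filter, mem_univ, true_and, mem_insert, mem_singleton]
    constructor
    · intro hx
      have hfac : (x - u) * ((x - u * z) * (x - u * z ^ 2)) = 0 := by
        linear_combination hx + (u ^ 2 * z * x - u * x ^ 2) * hsum - u ^ 3 * hz3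
      rcases mul_eq_zero.mp hfac with h | h
      · left; linear_combination h
      · rcases mul_eq_zero.mp h with h' | h'
        · right; left; linear_combination h'
        · right; right; linear_combination h'
    · rintro (rfl | rfl | rfl)
      · ring
      · linear_combination u ^ 3 * hz3
      · linear_combination (u ^ 3 * z ^ 3 + u ^ 3) * hz3
  rw [hfil]
  have h1 : u ≠ u * z := fun h =>
    hz1 (mul_left_cancel₀ hu (by rw [← h, mul_one])).symm
  have h2 : u ≠ u * z ^ 2 := fun h =>
    hz21 (mul_left_cancel₀ hu (by rw [← h, mul_one])).symm
  have h3' : u * z ≠ u * z ^ 2 := by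
    intro h
    have hz' : z = z ^ 2 := mul_left_cancel₀ hu h
    exact hz1 (by linear_combination hz3 + (1 + z) * hz')
  rw [card_insert_of_notMem (by simp [h1, h2]), card_insert_of_notMem (by simp [h3']),
    card_singleton]



variable {F : Type} [Field F] [Fintype F] [DecidableEq F]

lemma psi_cube_iff {ψ : MulChar F ℂ} (hψ : orderOf ψ = 3) {t : F} (ht : t ≠ 0) :
    ψ t = 1 ↔ ∃ u : F, u ^ 3 = t := by
  haveI : Fact (Nat.Prime 3) := ⟨by norm_num⟩
  have hψ3 : ψ ^ 3 = 1 := by rw [← hψ]; exact pow_orderOf_eq_one ψ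
  constructor
  · intro hψt
    obtain ⟨g, hg⟩ := IsCyclic.exists_generator (α := Fˣ)
    set Ψ := MulChar.equivToUnitHom ψ with hΨ
    have hcoe : ∀ x : Fˣ, (Ψ x : ℂ) = ψ (x : F) := fun x => MulChar.coe_equivToUnitHom ψ x
    have hord : orderOf (Ψ g) = 3 := by
      refine orderOf_eq_prime ?_ ?_
      · ext
        push_cast [hcoe]
        rw [← MulChar.pow_apply' ψ (by norm_num) (g : F), hψ3]
        exact MulChar.one_apply_coe g
      · intro h
        have h1 : ψ (g : F) = 1 := by rw [← hcoe, h]; simp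
        have : ψ = 1 := by
          rw [MulChar.eq_iff hg]
          rw [h1, MulChar.one_apply_coe]
        rw [this, orderOf_one] at hψ
        norm_num at hψ
    have htu : IsUnit t := isUnit_iff_ne_zero.mpr ht
    obtain ⟨m, hm⟩ := hg htu.unit
    have hm' : g ^ m = htu.unit := hm
    have hψm : Ψ g ^ m = 1 := by
      rw [← map_zpow, hm']
      ext
      rw [hcoe, IsUnit.unit_spec, hψt, Units.val_one]
    have h3m : (3 : ℤ) ∣ m := by
      have hd := orderOf_dvd_iff_zpow_eq_one.mpr hψm
      rw [hord] at hd
      exact_mod_cast hd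
    obtain ⟨m', rfl⟩ := h3m
    have hm'' : g ^ ((3 : ℤ) * m') = htu.unit := hm
    refine ⟨((g ^ m' : Fˣ) : F), ?_⟩
    have : ((g ^ m') ^ (3 : ℕ) : Fˣ) = g ^ (3 * m') := by
      rw [← zpow_natCast, ← zpow_mul]; ring_nf
    calc ((g ^ m' : Fˣ) : F) ^ 3 = (((g ^ m') ^ (3:ℕ) : Fˣ) : F) := by push_cast; ring
      _ = ((g ^ (3 * m') : Fˣ) : F) := by rw [this]
      _ = t := by rw [hm'', IsUnit.unit_spec]
  · rintro ⟨u, rfl⟩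
    have hu : u ≠ 0 := fun h => ht (by rw [h]; ring)
    rw [map_pow, ← MulChar.pow_apply' ψ (by norm_num), hψ3,
      MulChar.one_apply (isUnit_iff_ne_zero.mpr hu)]

lemma cube_val {ψ : MulChar F ℂ} (hψ : orderOf ψ = 3) {t : F} (ht : t ≠ 0) :
    (ψ t) ^ 3 = 1 := by
  have hψ3 : ψ ^ 3 = 1 := by rw [← hψ]; exact pow_orderOf_eq_one ψ
  rw [← MulChar.pow_apply' ψ (by norm_num), hψ3, MulChar.one_apply (isUnit_iff_ne_zero.mpr ht)]

variable {F : Type} [Field F] [Fintype F] [DecidableEq F]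

-- the key substitution lemma
lemma sum_shift (φ χ : MulChar F ℂ) {k : F} (hk : k ≠ 0) :
    ∑ t : F, φ t * χ (t + k) = φ (-k) * χ k * jacobiSum φ χ := by
  have hbij : Function.Bijective (fun s : F => -(k * s)) := by
    constructor
    · intro a b hab
      simpa [neg_inj, mul_right_inj' hk] using hab
    · intro t
      exact ⟨-(t / k), by field_simp⟩
  rw [jacobiSum, Finset.mul_sum]
  refine (Fintype.sum_bijective _ hbij _ _ fun s => ?_).symm
  have h1 : -(k * s) + k = k * (1 - s) := by ring
  have h2 : -(k * s) = (-k) * s := by ring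
  rw [h1, h2, map_mul, map_mul]
  ring

lemma jacobiSum_conj {ψ χ : MulChar F ℂ} (hψ3 : ψ ^ 3 = 1)
    (hχ : ∀ x : F, (starRingEnd ℂ) (χ x) = χ x) :
    (starRingEnd ℂ) (jacobiSum ψ χ) = jacobiSum (ψ ^ 2) χ := by
  rw [jacobiSum, jacobiSum, map_sum]
  refine Finset.sum_congr rfl fun x _ => ?_
  rw [map_mul, hχ]
  congr 1
  by_cases hx : x = 0
  · subst hx
    rw [ψ.map_zero, (ψ ^ 2).map_zero, map_zero]
  · rw [MulChar.pow_apply' ψ (by norm_num), conj_of_cube_eq_one]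
    rw [← MulChar.pow_apply' ψ (by norm_num), hψ3,
      MulChar.one_apply (isUnit_iff_ne_zero.mpr hx)]

/-- decomposition J = (2C-1) + 2D ω -/
lemma jacobiSum_decomp {ψ χ : MulChar F ℂ} (hψ3 : ψ ^ 3 = 1) (hψ1 : ψ ≠ 1)
    (hχpm : ∀ x : F, x ≠ 0 → χ x = 1 ∨ χ x = -1)
    {ω : ℂ} (hω : IsPrimitiveRoot ω 3) :
    ∃ C D : ℤ, jacobiSum ψ χ = (2 * C - 1) + (2 * D) * ω := by
  have hω3 : ω ^ 3 = 1 := hω.pow_eq_one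
  have hω1 : ω ≠ 1 := hω.ne_one (by norm_num)
  have hωsum : 1 + ω + ω ^ 2 = 0 := one_add_add_sq hω3 hω1
  have key : ∀ x ∈ (univ : Finset F) \ {0, 1},
      ∃ A B : ℤ, ψ x * (χ (1 - x) - 1) = 2 * ((A : ℂ) + B * ω) := by
    intro x hx
    simp only [mem_sdiff, mem_insert, mem_singleton, mem_univ, true_and, not_or] at hx
    obtain ⟨hx0, hx1⟩ := hx
    have h1x : (1 : F) - x ≠ 0 := fun h => hx1 (by linear_combination -h)
    obtain ⟨j, hj, hjx⟩ := MulChar.exists_apply_eq_pow hψ3 hω hx0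
    have hterm : ∃ A B : ℤ, ψ x = (A : ℂ) + B * ω := by
      interval_cases j
      · exact ⟨1, 0, by rw [hjx]; norm_num⟩
      · exact ⟨0, 1, by rw [hjx]; norm_num⟩
      · exact ⟨-1, -1, by rw [hjx]; push_cast; linear_combination hωsum⟩
    obtain ⟨A, B, hAB⟩ := hterm
    rcases hχpm (1 - x) h1x with h | h
    · exact ⟨0, 0, by rw [hAB, h]; push_cast; ring⟩
    · exact ⟨-A, -B, by rw [hAB, h]; push_cast; ring⟩
  -- J + 1 = sum of terms
  have hsum0 : ∑ x : F, ψ x = 0 := MulChar.sum_eq_zero_of_ne_one hψ1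
  have h01 : ((0 : F) : F) ≠ 1 := by norm_num
  have hsplit : ∑ x ∈ (univ : Finset F) \ {0, 1}, ψ x = -1 := by
    have hsub : ({0, 1} : Finset F) ⊆ univ := subset_univ _
    have := Finset.sum_sdiff_eq_sub (f := fun x : F => ψ x) hsub
    rw [hsum0] at this
    rw [this, Finset.sum_pair (by norm_num : (0:F) ≠ 1)]
    rw [ψ.map_zero, ψ.map_one]
    ring
  have hJ : jacobiSum ψ χ + 1 = ∑ x ∈ (univ : Finset F) \ {0, 1}, ψ x * (χ (1 - x) - 1) := by
    rw [jacobiSum_eq_sum_sdiff]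
    have : ∑ x ∈ (univ : Finset F) \ {0, 1}, ψ x * (χ (1 - x) - 1)
        = (∑ x ∈ (univ : Finset F) \ {0, 1}, ψ x * χ (1 - x)) - ∑ x ∈ (univ : Finset F) \ {0, 1}, ψ x := by
      rw [← Finset.sum_sub_distrib]
      exact Finset.sum_congr rfl fun x _ => by ring
    rw [this, hsplit]
    ring
  -- now sum up the decompositions
  have : ∃ A B : ℤ, ∑ x ∈ (univ : Finset F) \ {0, 1}, ψ x * (χ (1 - x) - 1)
      = 2 * ((A : ℂ) + B * ω) := by
    classical
    refine Finset.sum_induction _ (fun z => ∃ A B : ℤ, z = 2 * ((A : ℂ) + B * ω)) ?_ ⟨0, 0, by norm_num⟩ key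
    rintro a b ⟨A₁, B₁, rfl⟩ ⟨A₂, B₂, rfl⟩
    exact ⟨A₁ + A₂, B₁ + B₂, by push_cast; ring⟩
  obtain ⟨A, B, hAB⟩ := this
  exact ⟨A, B, by rw [← hJ] at hAB; push_cast at hAB ⊢; linear_combination hAB⟩




lemma card_cube_fiber (h3 : 3 ∣ Fintype.card F - 1) {ψ : MulChar F ℂ} (hψ : orderOf ψ = 3)
    (t : F) :
    ((univ.filter fun x : F => x ^ 3 = t).card : ℂ) = 1 + ψ t + ψ t ^ 2 := by
  by_cases ht : t = 0
  · subst ht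
    have : (univ.filter fun x : F => x ^ 3 = 0) = {0} := by
      ext x; simp [pow_eq_zero_iff]
    rw [this, card_singleton, ψ.map_zero]
    norm_num
  · by_cases hc : ∃ u : F, u ^ 3 = t
    · obtain ⟨u, rfl⟩ := hc
      have hu : u ≠ 0 := fun h => ht (by rw [h]; ring)
      rw [card_cube_roots h3 hu, (psi_cube_iff hψ ht).mpr ⟨u, rfl⟩]
      norm_num
    · have hempty : (univ.filter fun x : F => x ^ 3 = t) = ∅ := by
        ext x; simp only [mem_filter, mem_univ, true_and, notMem_empty, iff_false]
        exact fun h => hc ⟨x, h⟩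
      rw [hempty]
      have hne : ψ t ≠ 1 := fun h => hc ((psi_cube_iff hψ ht).mp h)
      have := one_add_add_sq (cube_val hψ ht) hne
      rw [card_empty]
      push_cast
      linear_combination -this

/-- the main character sum -/
lemma main_sum (h3 : 3 ∣ Fintype.card F - 1) {ψ χ : MulChar F ℂ} (hψ : orderOf ψ = 3)
    (hχ1 : χ ≠ 1) {k : F} (hk : k ≠ 0) (hψneg : ψ (-1) = 1) :
    ∑ x : F, χ (x ^ 3 + k)
      = ψ k * χ k * jacobiSum ψ χ + (ψ ^ 2) k * χ k * jacobiSum (ψ ^ 2) χ := by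
  have hψ3 : ψ ^ 3 = 1 := by rw [← hψ]; exact pow_orderOf_eq_one ψ
  -- fiberwise
  have h1 : ∑ x : F, χ (x ^ 3 + k)
      = ∑ t : F, ∑ x ∈ univ.filter fun x : F => x ^ 3 = t, χ (x ^ 3 + k) := by
    exact (Finset.sum_fiberwise_of_maps_to (fun x _ => mem_univ _) _).symm
  have h2 : ∀ t : F, ∑ x ∈ univ.filter fun x : F => x ^ 3 = t, χ (x ^ 3 + k)
      = ((univ.filter fun x : F => x ^ 3 = t).card : ℂ) * χ (t + k) := by
    intro t
    rw [Finset.sum_congr rfl fun x hx => ?_, Finset.sum_const, nsmul_eq_mul]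
    rw [(Finset.mem_filter.mp hx).2]
  rw [h1]
  simp_rw [h2]
  have h4 : ∀ t : F, ((univ.filter fun x : F => x ^ 3 = t).card : ℂ) * χ (t + k)
      = χ (t + k) + ψ t * χ (t + k) + (ψ ^ 2) t * χ (t + k) := by
    intro t
    rw [card_cube_fiber h3 hψ t, MulChar.pow_apply' ψ (by norm_num)]
    ring
  simp_rw [h4]
  rw [Finset.sum_add_distrib, Finset.sum_add_distrib]
  have hA : ∑ t : F, χ (t + k) = 0 := by
    have hbij : Function.Bijective (fun t : F => t + k) :=
      (Equiv.addRight k).bijective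
    rw [Fintype.sum_bijective _ hbij _ (fun t => χ t) (fun t => rfl)]
    exact MulChar.sum_eq_zero_of_ne_one hχ1
  have hB := sum_shift ψ χ hk
  have hC := sum_shift (ψ ^ 2) χ hk
  have hψnegk : ψ (-k) = ψ k := by
    rw [show -k = -1 * k by ring, map_mul, hψneg, one_mul]
  have hψ2negk : (ψ ^ 2) (-k) = (ψ ^ 2) k := by
    rw [show -k = -1 * k by ring, map_mul]
    rw [MulChar.pow_apply' ψ (by norm_num), hψneg]
    norm_num
  rw [hA, hB, hC, hψnegk, hψ2negk]
  ring



variable {F : Type} [Field F] [Fintype F] [DecidableEq F]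

/-- the curve -/
def Wc (k : F) : WeierstrassCurve.Affine F := WeierstrassCurve.toAffine ⟨0, 0, 0, 0, k⟩

lemma Wc_Δ (k : F) : (Wc k).Δ = -432 * k ^ 2 := by
  simp only [Wc, WeierstrassCurve.Δ, WeierstrassCurve.b₂, WeierstrassCurve.b₄,
    WeierstrassCurve.b₆, WeierstrassCurve.b₈]
  ring

lemma Wc_Δ_ne_zero {k : F} (hk : k ≠ 0) (h2 : (2 : F) ≠ 0) (h3 : (3 : F) ≠ 0) :
    (Wc k).Δ ≠ 0 := by
  rw [Wc_Δ]
  have h432 : (-432 : F) = -(2 ^ 4 * 3 ^ 3) := by norm_num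
  rw [h432]
  intro h
  rcases mul_eq_zero.mp h with h' | h'
  · rw [neg_eq_zero] at h'
    rcases mul_eq_zero.mp h' with h'' | h''
    · exact h2 (pow_eq_zero_iff (by norm_num) |>.mp h'')
    · exact h3 (pow_eq_zero_iff (by norm_num) |>.mp h'')
  · exact hk (pow_eq_zero_iff (by norm_num) |>.mp h')

lemma Wc_nonsingular_iff {k : F} (hk : k ≠ 0) (h2 : (2 : F) ≠ 0) (h3 : (3 : F) ≠ 0)
    (x y : F) : (Wc k).Nonsingular x y ↔ y ^ 2 = x ^ 3 + k := by
  constructor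
  · intro h
    have := h.1
    rw [equation_iff] at this
    simpa [Wc] using this
  · intro h
    refine (WeierstrassCurve.Affine.equation_iff_nonsingular_of_Δ_ne_zero (Wc_Δ_ne_zero hk h2 h3)).mp ?_
    rw [equation_iff]
    simpa [Wc] using h

/-- the points equiv -/
def pointEquiv (W : WeierstrassCurve.Affine F) :
    W.Point ≃ Option {xy : F × F // W.Nonsingular xy.1 xy.2} where
  toFun P := match P with
    | .zero => none
    | @Point.some _ _ _ x y h => some ⟨(x, y), h⟩
  invFun o := match o with
    | none => .zero
    | some ⟨⟨_, _⟩, h⟩ => .some _ _ h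
  left_inv P := by cases P <;> rfl
  right_inv o := by rcases o with - | ⟨⟨x, y⟩, h⟩ <;> rfl

lemma card_point {k : F} (hk : k ≠ 0) (h2 : (2 : F) ≠ 0) (h3 : (3 : F) ≠ 0) :
    Nat.card (Wc k).Point = 1 + ∑ x : F, ({y : F | y ^ 2 = x ^ 3 + k}.toFinset).card := by
  classical
  rw [Nat.card_congr (pointEquiv (Wc k))]
  have : Nat.card (Option {xy : F × F // (Wc k).Nonsingular xy.1 xy.2})
      = Fintype.card {xy : F × F // (Wc k).Nonsingular xy.1 xy.2} + 1 := by
    simp [Nat.card_eq_fintype_card, Fintype.card_option]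
  rw [this, add_comm]
  congr 1
  have he : {xy : F × F // (Wc k).Nonsingular xy.1 xy.2}
      ≃ {xy : F × F // xy.2 ^ 2 = xy.1 ^ 3 + k} :=
    Equiv.subtypeEquivRight fun xy => Wc_nonsingular_iff hk h2 h3 xy.1 xy.2
  rw [Fintype.card_congr he,
    Fintype.card_congr (Equiv.subtypeProdEquivSigmaSubtype fun (x y : F) => y ^ 2 = x ^ 3 + k),
    Fintype.card_sigma]
  refine Finset.sum_congr rfl fun x _ => ?_
  rw [Set.toFinset_card]
  exact Fintype.card_congr (Equiv.subtypeEquivRight fun y => by simp)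

lemma card_point_char {k : F} (hk : k ≠ 0) (h2 : (2 : F) ≠ 0) (h3 : (3 : F) ≠ 0)
    (hring : ringChar F ≠ 2) :
    (Nat.card (Wc k).Point : ℂ) = (Fintype.card F : ℂ) + 1
      + ∑ x : F, ((quadraticChar F (x ^ 3 + k) : ℤ) : ℂ) := by
  rw [card_point hk h2 h3]
  have hterm : ∀ x : F, (({y : F | y ^ 2 = x ^ 3 + k}.toFinset.card : ℕ) : ℂ)
      = 1 + ((quadraticChar F (x ^ 3 + k) : ℤ) : ℂ) := by
    intro x
    have h := quadraticChar_card_sqrts hring (x ^ 3 + k)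
    have h' : ((({y : F | y ^ 2 = x ^ 3 + k}.toFinset.card : ℤ)) : ℂ)
        = ((quadraticChar F (x ^ 3 + k) + 1 : ℤ) : ℂ) := by exact_mod_cast congrArg (fun n : ℤ => (n : ℂ)) h
    push_cast at h' ⊢
    linear_combination h'
  push_cast
  rw [Finset.sum_congr rfl (fun x (_ : x ∈ univ) => hterm x), Finset.sum_add_distrib,
    Finset.sum_const, card_univ, nsmul_eq_mul, mul_one]
  ring

/-- three-torsion: 3 divides the order for k = 1 -/
lemma three_dvd_card (h2 : (2 : F) ≠ 0) (h3 : (3 : F) ≠ 0) :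
    3 ∣ Nat.card (Wc (1 : F)).Point := by
  have h1 : (Wc (1 : F)).Nonsingular 0 1 := by
    rw [Wc_nonsingular_iff one_ne_zero h2 h3]
    norm_num
  set P : (Wc (1 : F)).Point := Point.some _ _ h1 with hP
  have hy : (1 : F) ≠ (Wc (1 : F)).negY 0 1 := by
    simp only [Wc, negY]
    intro h
    apply h2
    linear_combination h
  have hPP : P + P = Point.some _ _ (nonsingular_add h1 h1 fun h => hy h.2) :=
    Point.add_self_of_Y_ne hy
  have hL : (Wc (1 : F)).slope 0 0 1 1 = 0 := by
    rw [slope_of_Y_ne rfl hy]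
    simp [Wc]
  have hx : (Wc (1 : F)).addX 0 0 ((Wc (1 : F)).slope 0 0 1 1) = 0 := by
    rw [hL]; simp [Wc, addX]
  have hy' : (Wc (1 : F)).addY 0 0 1 ((Wc (1 : F)).slope 0 0 1 1) = (Wc (1 : F)).negY 0 1 := by
    rw [addY, negAddY, hx, hL]
    simp [Wc, negY]
  have h3P : 3 • P = 0 := by
    have : (3 : ℕ) • P = P + P + P := by
      rw [show (3 : ℕ) = 2 + 1 by norm_num, add_nsmul, two_nsmul, one_nsmul]
    rw [this, hPP]
    exact Point.add_of_Y_eq hx hy'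
  have hdvd : addOrderOf P ∣ 3 := addOrderOf_dvd_of_nsmul_eq_zero h3P
  have hne : addOrderOf P ≠ 1 := fun h =>
    Point.some_ne_zero h1 (AddMonoid.addOrderOf_eq_one_iff.mp h)
  have : addOrderOf P = 3 :=
    (Nat.prime_three.eq_one_or_self_of_dvd _ hdvd).resolve_left hne
  rw [← this]
  exact addOrderOf_dvd_natCard P


end SB
end

/-- The number of `F_p`-rational points, including the point at infinity, of the elliptic curve
`y² = x³ + k` over `F_p`. -/
noncomputable def Npts (p : ℕ) (k : ZMod p) : ℕ :=
  Nat.card (WeierstrassCurve.Affine.Point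
    (WeierstrassCurve.toAffine ⟨0, 0, 0, 0, k⟩))

open Finset Complex SB

/-- Theorem 2.4(b): if `p > 3` is prime with `p ≡ 1 (mod 3)` and `k ≠ 0`, then writing
`p = a² + 3b²` with `b > 0` and `a ≡ 2 (mod 3)`, the order of `y² = x³ + k` over `F_p` is one of
six values determined by the quadratic/cubic residue status of `k`. -/
theorem stmt_2 (p : ℕ) (hp : p.Prime) (hp3 : 3 < p) (hpmod : p % 3 = 1)
    (k : ZMod p) (hk : k ≠ 0) :
    ∃ a b : ℤ, 0 < b ∧ a % 3 = 2 ∧ (p : ℤ) = a ^ 2 + 3 * b ^ 2 ∧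
      (((∃ u : ZMod p, u ^ 6 = k) → (Npts p k : ℤ) = p + 1 + 2 * a) ∧
       ((∃ u : ZMod p, u ^ 3 = k) → ¬(∃ u : ZMod p, u ^ 2 = k) →
          (Npts p k : ℤ) = p + 1 - 2 * a) ∧
       ((∃ u : ZMod p, u ^ 2 = k) → ¬(∃ u : ZMod p, u ^ 3 = k) →
          ((Npts p k : ℤ) = p + 1 - a + 3 * b ∨ (Npts p k : ℤ) = p + 1 - a - 3 * b)) ∧
       (¬(∃ u : ZMod p, u ^ 2 = k) → ¬(∃ u : ZMod p, u ^ 3 = k) →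
          ((Npts p k : ℤ) = p + 1 + a + 3 * b ∨ (Npts p k : ℤ) = p + 1 + a - 3 * b))) := by
  haveI : Fact p.Prime := ⟨hp⟩
  -- basic facts
  have h2 : (2 : (ZMod p)) ≠ 0 := by
    have : ((2 : ℕ) : (ZMod p)) ≠ 0 := by
      rw [Ne, ZMod.natCast_eq_zero_iff]
      intro h
      exact absurd (Nat.le_of_dvd (by norm_num) h) (by omega)
    simpa using this
  have h3 : (3 : (ZMod p)) ≠ 0 := by
    have : ((3 : ℕ) : (ZMod p)) ≠ 0 := by
      rw [Ne, ZMod.natCast_eq_zero_iff]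
      intro h
      exact absurd (Nat.le_of_dvd (by norm_num) h) (by omega)
    simpa using this
  have hring2 : ringChar (ZMod p) ≠ 2 := by
    rw [ZMod.ringChar_zmod_n]; omega
  have hcardF : Fintype.card (ZMod p) = p := ZMod.card p
  have h3div : 3 ∣ Fintype.card (ZMod p) - 1 := by rw [hcardF]; omega
  -- the cube root of unity in ℂ
  set ω : ℂ := Complex.exp (2 * Real.pi * Complex.I / 3) with hωdef
  have hω : IsPrimitiveRoot ω 3 := by
    have := Complex.isPrimitiveRoot_exp 3 (by norm_num)
    simpa [hωdef] using this
  have hω3 : ω ^ 3 = 1 := hω.pow_eq_one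
  have hω1 : ω ≠ 1 := hω.ne_one (by norm_num)
  have hωsum : 1 + ω + ω ^ 2 = 0 := one_add_add_sq hω3 hω1
  -- characters
  obtain ⟨ψ, hψord⟩ := MulChar.exists_mulChar_orderOf (ZMod p) h3div hω
  set χ₀ := quadraticChar (ZMod p) with hχ₀
  set χ : MulChar (ZMod p) ℂ := χ₀.ringHomComp (Int.castRingHom ℂ) with hχdef
  have hχapp : ∀ t : (ZMod p), χ t = ((χ₀ t : ℤ) : ℂ) := fun t => rfl
  have hχ1 : χ ≠ 1 :=
    (MulChar.ringHomComp_ne_one_iff (Int.cast_injective (α := ℂ))).mpr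
      (quadraticChar_ne_one hring2)
  have hψ3 : ψ ^ 3 = 1 := by rw [← hψord]; exact pow_orderOf_eq_one ψ
  have hψ1 : ψ ≠ 1 := by
    intro h
    rw [h, orderOf_one] at hψord
    norm_num at hψord
  have hψ2ne : ψ ^ 2 ≠ 1 := by
    intro h
    have := orderOf_dvd_of_pow_eq_one h
    rw [hψord] at this
    norm_num at this
  have hψneg : ψ (-1 : (ZMod p)) = 1 := by
    have ha2 : ψ (-1 : (ZMod p)) ^ 2 = 1 := by
      have h' : ψ (-1 : (ZMod p)) ^ 2 = ψ (((-1 : (ZMod p))) ^ 2) := (map_pow ψ _ 2).symm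
      rw [h', show ((-1 : (ZMod p))) ^ 2 = 1 from by ring, ψ.map_one]
    have ha3 : ψ (-1 : (ZMod p)) ^ 3 = 1 := cube_val hψord (neg_ne_zero.mpr one_ne_zero)
    calc ψ (-1 : (ZMod p)) = ψ (-1 : (ZMod p)) * ψ (-1 : (ZMod p)) ^ 2 := by rw [ha2, mul_one]
      _ = ψ (-1 : (ZMod p)) ^ 3 := by ring
      _ = 1 := ha3
  have hχpm : ∀ x : (ZMod p), x ≠ 0 → χ x = 1 ∨ χ x = -1 := by
    intro x hx
    rcases quadraticChar_dichotomy hx with h | h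
    · left; rw [hχapp, h]; norm_num
    · right; rw [hχapp, h]; norm_num
  have hχconj : ∀ x : (ZMod p), (starRingEnd ℂ) (χ x) = χ x := by
    intro x
    rw [hχapp]
    exact map_intCast (starRingEnd ℂ) _
  have hχχ : χ * χ = 1 := by
    ext a
    have hmul : (χ * χ) (a : (ZMod p)) = χ (a : (ZMod p)) * χ (a : (ZMod p)) := by
      rw [MulChar.coeToFun_mul, Pi.mul_apply]
    rw [MulChar.one_apply_coe, hmul]
    rcases hχpm (a : (ZMod p)) (Units.ne_zero a) with h | h <;> rw [h] <;> norm_num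
  have hχinv : χ⁻¹ = χ := inv_eq_of_mul_eq_one_right hχχ
  have hψinv : ψ⁻¹ = ψ ^ 2 := inv_eq_of_mul_eq_one_right (by rw [← pow_succ']; exact hψ3)
  have hχψ : ψ * χ ≠ 1 := by
    intro h
    have hψχ : ψ = χ := by
      calc ψ = ψ * (χ * χ) := by rw [hχχ, mul_one]
        _ = (ψ * χ) * χ := (mul_assoc ψ χ χ).symm
        _ = χ := by rw [h, one_mul]
    apply hψ2ne
    rw [hψχ, pow_two, hχχ]
  -- Jacobi sum facts
  set J := jacobiSum ψ χ with hJdef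
  have hconjJ : (starRingEnd ℂ) J = jacobiSum (ψ ^ 2) χ := jacobiSum_conj hψ3 hχconj
  have hJJ : J * jacobiSum (ψ ^ 2) χ = (p : ℂ) := by
    have h := jacobiSum_mul_jacobiSum_inv
      (show ringChar ℂ ≠ ringChar (ZMod p) by
        rw [ringChar.eq_zero, ZMod.ringChar_zmod_n]; omega)
      hψ1 hχ1 hχψ
    rw [hψinv, hχinv, hcardF] at h
    exact h
  obtain ⟨C, D, hCD⟩ := jacobiSum_decomp hψ3 hψ1 hχpm hω
  obtain ⟨A, hA⟩ : ∃ A : ℤ, A = 2 * C - 1 := ⟨_, rfl⟩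
  have hJ : J = (A : ℂ) + 2 * (D : ℂ) * ω := by
    rw [hJdef, hCD, hA]; push_cast; ring
  have hJc : (starRingEnd ℂ) J = (A : ℂ) + 2 * (D : ℂ) * ω ^ 2 := by
    rw [hJ]
    simp only [map_add, map_mul, map_intCast, map_ofNat, conj_of_cube_eq_one hω3]
  -- the norm equation
  obtain ⟨r, s, hr, hs⟩ : ∃ r s : ℤ, r = A - D ∧ s = D := ⟨_, _, rfl, rfl⟩
  have hnorm : (p : ℤ) = r ^ 2 + 3 * s ^ 2 := by
    have hc : ((p : ℤ) : ℂ) = ((r ^ 2 + 3 * s ^ 2 : ℤ) : ℂ) := by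
      push_cast
      rw [← hJJ, ← hconjJ, hJc, hJ, hr, hs]
      push_cast
      linear_combination (2*(A:ℂ)*D) * hωsum + (4*(D:ℂ)^2) * hω3
    exact_mod_cast hc
  -- counting formula
  have hcount : ∀ m : (ZMod p), m ≠ 0 →
      (Npts p m : ℂ) = (p : ℂ) + 1 + (ψ m * χ m * J + (ψ m) ^ 2 * χ m * ((starRingEnd ℂ) J)) := by
    intro m hm
    have h1 : (Npts p m : ℂ) = (Fintype.card (ZMod p) : ℂ) + 1
        + ∑ x : (ZMod p), ((χ₀ (x ^ 3 + m) : ℤ) : ℂ) :=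
      card_point_char hm h2 h3 hring2
    have h2' : ∑ x : (ZMod p), χ (x ^ 3 + m)
        = ψ m * χ m * jacobiSum ψ χ + (ψ ^ 2) m * χ m * jacobiSum (ψ ^ 2) χ :=
      main_sum h3div hψord hχ1 hm hψneg
    rw [hcardF] at h1
    rw [Npts] at h1 ⊢
    rw [h1]
    congr 1
    calc ∑ x : (ZMod p), ((χ₀ (x ^ 3 + m) : ℤ) : ℂ) = ∑ x : (ZMod p), χ (x ^ 3 + m) := by
          exact Finset.sum_congr rfl fun x _ => (hχapp _).symm
      _ = ψ m * χ m * J + (ψ m) ^ 2 * χ m * ((starRingEnd ℂ) J) := by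
          rw [h2', hconjJ, MulChar.pow_apply' ψ (by norm_num)]
  have hfinal : ∀ (m : (ZMod p)) (t : ℤ), m ≠ 0 →
      (ψ m * χ m * J + (ψ m) ^ 2 * χ m * ((starRingEnd ℂ) J)) = (t : ℂ) →
      (Npts p m : ℤ) = (p : ℤ) + 1 + t := by
    intro m t hm ht
    have := hcount m hm
    rw [ht] at this
    have h' : ((Npts p m : ℤ) : ℂ) = (((p : ℤ) + 1 + t : ℤ) : ℂ) := by
      push_cast
      push_cast at this
      linear_combination this
    exact_mod_cast h'
  -- pin r mod 3 using k = 1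
  have hone : (1 : (ZMod p)) ≠ 0 := one_ne_zero
  have hN1 : (Npts p 1 : ℤ) = (p : ℤ) + 1 + 2 * r := by
    refine hfinal 1 (2 * r) hone ?_
    rw [map_one, map_one, hJc, hJ]
    push_cast [hr, hs]
    linear_combination (2 * (D : ℂ)) * hωsum
  have h3N1 : (3 : ℕ) ∣ Npts p 1 := three_dvd_card h2 h3
  have hr3 : r % 3 = 2 := by
    have hd : (3 : ℤ) ∣ ((Npts p 1 : ℕ) : ℤ) := Int.natCast_dvd_natCast.mpr h3N1
    rw [hN1] at hd
    have hpz : (p : ℤ) % 3 = 1 := by omega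
    omega
  -- s ≠ 0
  have hs0 : s ≠ 0 := by
    intro h
    rw [h] at hnorm
    have hpr : (p : ℤ) = r ^ 2 := by linarith [hnorm]
    have hnat : p = r.natAbs ^ 2 := by
      have : (p : ℤ) = (r.natAbs : ℤ) ^ 2 := by rw [Int.natAbs_sq]; linarith [hpr]
      exact_mod_cast this
    have hdvd : r.natAbs ∣ p := ⟨r.natAbs, by rw [hnat]; ring⟩
    rcases (Nat.Prime.eq_one_or_self_of_dvd hp _ hdvd) with h' | h'
    · rw [h'] at hnat; omega
    · rw [h'] at hnat; nlinarith [hnat, hp3]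
  -- the residue data for k
  have hχk := hχpm k hk
  obtain ⟨j, hj, hjval⟩ := MulChar.exists_apply_eq_pow hψ3 hω hk
  -- assemble
  refine ⟨r, |s|, by positivity, hr3, by rw [hnorm, _root_.sq_abs], ?_, ?_, ?_, ?_⟩
  · -- sixth power
    rintro ⟨u, hu⟩
    have hu0 : u ≠ 0 := by rintro rfl; rw [← hu] at hk; norm_num at hk
    have hcube : ψ k = 1 := (psi_cube_iff hψord hk).mpr ⟨u ^ 2, by rw [← hu]; ring⟩
    have hsq : χ₀ k = 1 := (quadraticChar_one_iff_isSquare hk).mpr ⟨u ^ 3, by rw [← hu]; ring⟩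
    have hχk1 : χ k = 1 := by rw [hχapp, hsq]; norm_num
    refine hfinal k (2 * r) hk ?_
    rw [hcube, hχk1, hJc, hJ]
    push_cast [hr, hs]
    linear_combination (2 * (D : ℂ)) * hωsum
  · -- cube, not square
    rintro ⟨u, hu⟩ hnsq
    have hcube : ψ k = 1 := (psi_cube_iff hψord hk).mpr ⟨u, hu⟩
    have hsq : χ₀ k = -1 := by
      rw [quadraticChar_neg_one_iff_not_isSquare]
      rintro ⟨v, hv⟩
      exact hnsq ⟨v, by rw [hv]; ring⟩
    have hχk1 : χ k = -1 := by rw [hχapp, hsq]; norm_num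
    refine hfinal k (-(2 * r)) hk ?_
    rw [hcube, hχk1, hJc, hJ]
    push_cast [hr, hs]
    linear_combination (-2 * (D : ℂ)) * hωsum
  · -- square, not cube
    rintro ⟨u, hu⟩ hncube
    have hsq : χ₀ k = 1 := (quadraticChar_one_iff_isSquare hk).mpr ⟨u, by rw [← hu]; ring⟩
    have hχk1 : χ k = 1 := by rw [hχapp, hsq]; norm_num
    have hψk : ψ k = ω ∨ ψ k = ω ^ 2 := by
      have hne1 : ψ k ≠ 1 := fun h => hncube ((psi_cube_iff hψord hk).mp h)
      interval_cases j
      · exact absurd (by rw [hjval]; norm_num) hne1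
      · left; rw [hjval]; norm_num
      · right; exact hjval
    have habs : |s| = s ∨ |s| = -s := abs_choice s
    rcases hψk with hψk | hψk
    · have hN : (Npts p k : ℤ) = (p : ℤ) + 1 + (-(r + 3 * s)) := by
        refine hfinal k (-(r + 3 * s)) hk ?_
        rw [hψk, hχk1, hJc, hJ]
        push_cast [hr, hs]
        linear_combination ((A : ℂ) + 2 * D) * hωsum + (2 * (D : ℂ) * ω) * hω3
      omega
    · have hN : (Npts p k : ℤ) = (p : ℤ) + 1 + (3 * s - r) := by
        refine hfinal k (3 * s - r) hk ?_
        rw [hψk, hχk1, hJc, hJ]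
        push_cast [hr, hs]
        linear_combination (A : ℂ) * hωsum + ((A : ℂ) * ω + 2 * D + 2 * D * (ω ^ 3 + 1)) * hω3
      omega
  · -- neither square nor cube
    intro hnsq hncube
    have hsq : χ₀ k = -1 := by
      rw [quadraticChar_neg_one_iff_not_isSquare]
      rintro ⟨v, hv⟩
      exact hnsq ⟨v, by rw [hv]; ring⟩
    have hχk1 : χ k = -1 := by rw [hχapp, hsq]; norm_num
    have hψk : ψ k = ω ∨ ψ k = ω ^ 2 := by
      have hne1 : ψ k ≠ 1 := fun h => hncube ((psi_cube_iff hψord hk).mp h)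
      interval_cases j
      · exact absurd (by rw [hjval]; norm_num) hne1
      · left; rw [hjval]; norm_num
      · right; exact hjval
    have habs : |s| = s ∨ |s| = -s := abs_choice s
    rcases hψk with hψk | hψk
    · have hN : (Npts p k : ℤ) = (p : ℤ) + 1 + (r + 3 * s) := by
        refine hfinal k (r + 3 * s) hk ?_
        rw [hψk, hχk1, hJc, hJ]
        push_cast [hr, hs]
        linear_combination (-(A : ℂ) - 2 * D) * hωsum + (-2 * (D : ℂ) * ω) * hω3
      omega
    · have hN : (Npts p k : ℤ) = (p : ℤ) + 1 + (r - 3 * s) := by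
        refine hfinal k (r - 3 * s) hk ?_
        rw [hψk, hχk1, hJc, hJ]
        push_cast [hr, hs]
        linear_combination (-(A : ℂ)) * hωsum + (-(A : ℂ) * ω - 2 * D - 2 * D * (ω ^ 3 + 1)) * hω3
      omega
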